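/- arXiv:2001.04961 — 7 statements merged into one kernel-verified Lean document; each statement's English description precedes it below -/
import Mathlib

section
/- Let V be a vector time, t a thread, and R : Thr → (Thr → ℕ) a family of vector times indexed by threads. Suppose V(u) = 0 for all u ≠ t. Then there exists u ≠ t with V ⊑ R(u) if and only if V ⊑ ⨆_{u ∈ Thr} (R(u))[0/u], where (R(u))[0/u] denotes R(u) with its u-th component replaced by 0 and ⨆ denotes the pointwise join (maximum) over all threads u. -/
/-- Read-clock optimization: for `V` concentrated on coordinate `t`,
`∃ u ≠ t, V ⊑ R u` iff `V ⊑ ⨆_{u} (R u)[0/u]`, where the join is pointwise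
over all threads and `(R u)[0/u]` zeroes out the `u`-th component. -/
theorem readClock_optimization {Thr : Type*} [Fintype Thr] [DecidableEq Thr]
    (hcard : 1 < Fintype.card Thr)
    (V : Thr → ℕ) (t : Thr) (R : Thr → Thr → ℕ)
    (hV : ∀ u, u ≠ t → V u = 0) :
    (∃ u, u ≠ t ∧ ∀ v, V v ≤ R u v) ↔
      (∀ v, V v ≤ Finset.univ.sup (fun u => Function.update (R u) u 0 v)) := by
  constructor
  · rintro ⟨u, hut, hle⟩ v
    by_cases hv : v = t
    · calc V v ≤ R u v := hle v
        _ = Function.update (R u) u 0 v :=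
            (Function.update_of_ne (by rw [hv]; exact Ne.symm hut) 0 (R u)).symm
        _ ≤ Finset.univ.sup (fun u => Function.update (R u) u 0 v) :=
            Finset.le_sup (f := fun u => Function.update (R u) u 0 v) (Finset.mem_univ u)
    · simp [hV v hv]
  · intro h
    have ht := h t
    obtain ⟨u, -, hu⟩ := Finset.exists_mem_eq_sup Finset.univ
      (Finset.univ_nonempty_iff.2 ⟨t⟩)
      (fun u => Function.update (R u) u 0 t)
    rw [hu] at ht
    by_cases hut : u = t
    · rw [hut, Function.update_self] at ht
      obtain ⟨w, hw⟩ := Fintype.exists_ne_of_one_lt_card hcard t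
      refine ⟨w, hw, fun v => ?_⟩
      by_cases hv : v = t
      · rw [hv]; omega
      · simp [hV v hv]
    · refine ⟨u, hut, fun v => ?_⟩
      by_cases hv : v = t
      · rw [Function.update_of_ne (Ne.symm hut)] at ht
        rw [hv]; exact ht
      · simp [hV v hv]
end

section
/- A trace σ is not conflict serializable (i.e., there exists a sequence of k > 1 distinct transactions T0, ..., T_{k-1} with T_i ≤THB T_{(i+1) mod k} for all i) if and only if there exist events e, f in σ such that e ⇒path f and f ≤CHB e, where ⇒path is the path-through-transactions relation. -/
/-- Conflict-happens-before: reflexive-transitive closure of conflict edges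
oriented by trace order (events are `Fin n`, ordered by trace position). -/
def chb {n : ℕ} (C : Fin n → Fin n → Prop) : Fin n → Fin n → Prop :=
  Relation.ReflTransGen (fun e f => e < f ∧ C e f)

/-- Transaction happens-before. -/
def thb {n : ℕ} {Tx : Type*} (C : Fin n → Fin n → Prop) (txn : Fin n → Tx)
    (T T' : Tx) : Prop :=
  ∃ e f, txn e = T ∧ txn f = T' ∧ chb C e f

/-- Path through transactions: `e ⇒path f`. -/
def pathTxn {n : ℕ} {Tx : Type*} (C : Fin n → Fin n → Prop) (txn : Fin n → Tx)
    (e f : Fin n) : Prop :=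
  ∃ k, 1 < k ∧ ∃ es fs : ℕ → Fin n,
    es 0 = e ∧ fs (k - 1) = f ∧
    (∀ i < k, txn (es i) = txn (fs i)) ∧
    (∀ i, i + 1 < k → txn (fs i) ≠ txn (es (i + 1)) ∧ chb C (fs i) (es (i + 1)))

/-- A cyclic sequence of `k > 1` distinct transactions under `thb`
(conflict-serializability violation). -/
def hasCycle {n : ℕ} {Tx : Type*} (C : Fin n → Fin n → Prop) (txn : Fin n → Tx) : Prop :=
  ∃ k, 1 < k ∧ ∃ Ts : ℕ → Tx,
    (∀ i < k, ∀ j < k, Ts i = Ts j → i = j) ∧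
    (∀ i < k, thb C txn (Ts i) (Ts ((i + 1) % k)))

/-- The new-edge relation `e ⤳ f`. -/
def newEdge {n : ℕ} {Tx : Type*} (C : Fin n → Fin n → Prop) (txn : Fin n → Tx)
    (completed : Tx → Prop) (e f : Fin n) : Prop :=
  ∃ g, chb C e g ∧ (g = f ∨ (pathTxn C txn g f ∧ completed (txn g)))

lemma cycle_shrink {n : ℕ} {Tx : Type*} (C : Fin n → Fin n → Prop) (txn : Fin n → Tx) :
    ∀ k, 1 < k → ∀ Ts : ℕ → Tx,
      (∀ i < k, Ts i ≠ Ts ((i + 1) % k) ∧ thb C txn (Ts i) (Ts ((i + 1) % k))) →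
      hasCycle C txn := by
  intro k
  induction k using Nat.strong_induction_on with
  | _ k ih =>
    intro hk Ts h
    by_cases hdist : ∀ i < k, ∀ j < k, Ts i = Ts j → i = j
    · exact ⟨k, hk, Ts, hdist, fun i hi => (h i hi).2⟩
    · push_neg at hdist
      obtain ⟨i, hi, j, hj, heq, hij⟩ := hdist
      have key : ∀ i j, i < k → j < k → Ts i = Ts j → i < j → hasCycle C txn := by
        clear heq hij hi hj i j
        intro i j hi hj heq hlt
        have hL2 : i + 2 ≤ j := by
          by_contra h'
          have hj' : j = i + 1 := by omega
          have hne := (h i hi).1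
          rw [Nat.mod_eq_of_lt (by omega : i + 1 < k)] at hne
          exact hne (hj' ▸ heq)
        refine ih (j - i) (by omega) (by omega) (fun m => Ts (i + m)) ?_
        intro m hm
        rcases Nat.lt_or_ge (m + 1) (j - i) with h1 | h1
        · have hmod : (m + 1) % (j - i) = m + 1 := Nat.mod_eq_of_lt h1
          have him : i + m < k := by omega
          have hthis := h (i + m) him
          rw [Nat.mod_eq_of_lt (by omega : i + m + 1 < k)] at hthis
          rw [hmod]
          simpa [Nat.add_assoc] using hthis
        · have hm1 : m + 1 = j - i := by omega
          have hmod : (m + 1) % (j - i) = 0 := by rw [hm1]; simp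
          have hthis := h (j - 1) (by omega)
          rw [show j - 1 + 1 = j by omega, Nat.mod_eq_of_lt hj] at hthis
          rw [hmod]
          simpa [show i + m = j - 1 by omega, heq] using hthis
      rcases Nat.lt_or_ge i j with hlt | hge
      · exact key i j hi hj heq hlt
      · exact key j i hj hi heq.symm (by omega)

/-- A trace is not conflict serializable iff there are events `e, f` with
`e ⇒path f` and `f ≤CHB e`. -/
theorem not_serializable_iff_path_chb {n : ℕ} {Tx : Type*}
    (C : Fin n → Fin n → Prop) (hC : Symmetric C) (txn : Fin n → Tx) :
    hasCycle C txn ↔ ∃ e f : Fin n, pathTxn C txn e f ∧ chb C f e := by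
  constructor
  · rintro ⟨k, hk, Ts, hdist, hthb⟩
    simp only [thb] at hthb
    choose a b h1 h2 h3 using hthb
    have hk1 : k - 1 < k := by omega
    have hk0 : 0 < k := by omega
    set df : Fin n := a 0 hk0 with hdf
    set es : ℕ → Fin n := fun m =>
      if m = 0 then b (k - 1) hk1 else if h : m - 1 < k then b (m - 1) h else df with hes
    set fs : ℕ → Fin n := fun m => if h : m < k then a m h else df with hfs
    refine ⟨b (k - 1) hk1, a (k - 1) hk1, ⟨k, hk, es, fs, by simp [hes], by simp [hfs, hk1],
      ?_, ?_⟩, h3 (k - 1) hk1⟩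
    · intro i hi
      rcases Nat.eq_zero_or_pos i with rfl | hpos
      · have := h2 (k - 1) hk1
        rw [show k - 1 + 1 = k by omega, Nat.mod_self] at this
        simp only [hes, hfs, if_pos rfl, dif_pos hk0]
        rw [this, h1 0 hk0]
      · have hi1 : i - 1 < k := by omega
        simp only [hes, hfs, if_neg (by omega : ¬ i = 0), dif_pos hi1, dif_pos hi]
        rw [h2 (i - 1) hi1, h1 i hi,
          show i - 1 + 1 = i by omega, Nat.mod_eq_of_lt hi]
    · intro i hi1
      have hi : i < k := by omega
      have hes1 : es (i + 1) = b i hi := by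
        simp only [hes, if_neg (by omega : ¬ i + 1 = 0), Nat.add_sub_cancel, dif_pos hi]
      have hfs1 : fs i = a i hi := by simp [hfs, hi]
      rw [hes1, hfs1]
      refine ⟨?_, h3 i hi⟩
      rw [h1 i hi, h2 i hi, Nat.mod_eq_of_lt hi1]
      intro hEq
      exact absurd (hdist i hi (i + 1) hi1 hEq) (by omega)
  · rintro ⟨e, f, ⟨k, hk, es, fs, he, hf, hsame, hstep⟩, hfe⟩
    have hthb' : ∀ i, i + 1 < k →
        txn (es i) ≠ txn (es (i + 1)) ∧ thb C txn (txn (es i)) (txn (es (i + 1))) := by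
      intro i hi
      obtain ⟨hne, hc⟩ := hstep i hi
      have hs := hsame i (by omega)
      exact ⟨by rw [hs]; exact hne, ⟨fs i, es (i + 1), hs.symm, rfl, hc⟩⟩
    by_cases hwrap : txn (es (k - 1)) = txn (es 0)
    · -- drop the last (redundant) transaction; need k ≥ 3
      have hk3 : 3 ≤ k := by
        by_contra h'
        have hk2 : k = 2 := by omega
        have hne := (hthb' 0 (by omega)).1
        rw [hk2] at hwrap
        norm_num at hwrap
        exact hne hwrap.symm
      refine cycle_shrink C txn (k - 1) (by omega) (fun m => txn (es m)) ?_
      intro i hi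
      rcases Nat.lt_or_ge (i + 1) (k - 1) with h1 | h1
      · rw [Nat.mod_eq_of_lt h1]
        exact hthb' i (by omega)
      · have hi1 : i = k - 2 := by omega
        have hmod : (i + 1) % (k - 1) = 0 := by rw [show i + 1 = k - 1 by omega]; simp
        rw [hmod]
        have := hthb' (k - 2) (by omega)
        rw [show k - 2 + 1 = k - 1 by omega, hwrap] at this
        rw [hi1]
        exact this
    · refine cycle_shrink C txn k hk (fun m => txn (es m)) ?_
      intro i hi
      rcases Nat.lt_or_ge (i + 1) k with h1 | h1
      · rw [Nat.mod_eq_of_lt h1]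
        exact hthb' i h1
      · have hi1 : i = k - 1 := by omega
        have hmod : (i + 1) % k = 0 := by rw [show i + 1 = k by omega]; simp
        rw [hmod, hi1]
        refine ⟨hwrap, fs (k - 1), es 0, (hsame (k - 1) (by omega)).symm, rfl, ?_⟩
        rw [hf, he]
        exact hfe
end

section
/- Suppose a trace σ contains a transaction T and events e, f with f ∈ T, e ∉ T, such that T▷ ⤳ e and e ⤳ f, where T▷ is the begin event of T and ⤳ is the relation of Definition new-edge. Then σ is not conflict serializable. -/
/-- From a closed walk through two distinct vertices, extract a simple cycle. -/
lemma walk_to_cycle {Tx : Type*} (R : Tx → Tx → Prop) :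
    ∀ m : ℕ, ∀ w : ℕ → Tx, ∀ a b : Tx, a ≠ b → w 0 = a → w m = a →
    (∀ i < m, R (w i) (w (i + 1))) → ∀ j < m, w j = b →
    ∃ k, 1 < k ∧ ∃ Ts : ℕ → Tx,
      (∀ i < k, ∀ j < k, Ts i = Ts j → i = j) ∧
      (∀ i < k, R (Ts i) (Ts ((i + 1) % k))) := by
  intro m
  induction m using Nat.strong_induction_on with
  | _ m ih =>
    intro w a b hab h0 hm hedge j hj hb
    have hj0 : j ≠ 0 := by rintro rfl; exact hab (h0 ▸ hb.symm ▸ rfl)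
    by_cases hdup : ∃ p q, p < q ∧ q ≤ m ∧ w p = w q ∧ ¬(p = 0 ∧ q = m)
    · obtain ⟨p, q, hpq, hqm, hwpq, hne⟩ := hdup
      set d := q - p with hd
      have hd1 : 1 ≤ d := by omega
      have hdm : d < m := by
        by_contra h
        have : q = m ∧ p = 0 := by omega
        exact hne ⟨this.2, this.1⟩
      set m' := m - d with hm'
      have hm'lt : m' < m := by omega
      have hpm' : p ≤ m' := by omega
      set w' : ℕ → Tx := fun i => if i ≤ p then w i else w (i + d) with hw'
      have hw'0 : w' 0 = a := by simp [hw', h0]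
      have hw'm' : w' m' = a := by
        by_cases h : m' ≤ p
        · have : m' = p := by omega
          have hq : q = m := by omega
          simp only [hw', if_pos h, this]
          rw [hwpq, hq, hm]
          simp
        · simp only [hw', if_neg h]
          have : m' + d = m := by omega
          rw [this, hm]
      have hw'edge : ∀ i < m', R (w' i) (w' (i + 1)) := by
        intro i hi
        by_cases h1 : i + 1 ≤ p
        · simp only [hw', if_pos h1, if_pos (by omega : i ≤ p)]
          exact hedge i (by omega)
        · by_cases h2 : i ≤ p
          · have hip : i = p := by omega
            simp only [hw', if_pos h2, if_neg h1]
            have : i + 1 + d = q + 1 := by omega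
            rw [this, hip, hwpq]
            exact hedge q (by omega)
          · simp only [hw', if_neg h1, if_neg h2]
            have : i + 1 + d = (i + d) + 1 := by omega
            rw [this]
            exact hedge (i + d) (by omega)
      by_cases hex : ∃ j' < m', w' j' ≠ a
      · obtain ⟨j', hj', hne'⟩ := hex
        exact ih m' hm'lt w' a (w' j') (fun h => hne' h.symm) hw'0 hw'm' hw'edge j' hj' rfl
      · push_neg at hex
        -- inner walk from p to q
        have hwp : w p = a := by
          by_cases h : q = m
          · rw [hwpq, h, hm]
          · have : p < m' := by omega
            have := hex p this
            simpa [hw'] using this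
        have hinner : p < j ∧ j < q := by
          constructor
          · by_contra h
            push_neg at h
            have : w j = a := by
              have hjm' : j < m' ∨ j = m' := by omega
              rcases hjm' with h' | h'
              · have := hex j h'
                simpa [hw', if_pos h] using this
              · rw [h'] at h ⊢
                have : m' = p := by omega
                rw [this, hwp]
            exact hab (hb ▸ this.symm ▸ rfl)
          · by_contra h
            push_neg at h
            have hja : w j = a := by
              by_cases hjq : j = q
              · rw [hjq, ← hwpq, hwp]
              · have hgt : j - d > p := by omega
                have hlt : j - d < m' := by omega
                have := hex (j - d) hlt
                have heq : w' (j - d) = w j := by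
                  simp only [hw', if_neg (by omega : ¬ j - d ≤ p)]
                  congr 1; omega
                rw [heq] at this; exact this
            exact hab (hb ▸ hja.symm ▸ rfl)
        have hwq : w (p + d) = a := by
          have hq2 : p + d = q := by omega
          rw [hq2, ← hwpq]; exact hwp
        refine ih d hdm (fun i => w (p + i)) a b hab (by simpa using hwp)
          hwq ?_ (j - p) (by omega) ?_
        · intro i hi
          show R (w (p + i)) (w (p + (i + 1)))
          have : p + (i + 1) = (p + i) + 1 := by omega
          rw [this]
          exact hedge (p + i) (by omega)
        · show w (p + (j - p)) = b
          have : p + (j - p) = j := by omega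
          rw [this, hb]
    · push_neg at hdup
      refine ⟨m, by omega, w, ?_, ?_⟩
      · intro i hi j' hj' heq
        by_contra hne
        rcases Nat.lt_or_ge i j' with h | h
        · have := hdup i j' h (by omega) heq
          omega
        · have h' : j' < i := by omega
          have := hdup j' i h' (by omega) heq.symm
          omega
      · intro i hi
        by_cases h : i + 1 = m
        · have : (i + 1) % m = 0 := by rw [h]; simp
          rw [this]
          have : w (i + 1) = w 0 := by rw [h, hm, h0]
          rw [← this]
          exact hedge i hi
        · rw [Nat.mod_eq_of_lt (by omega)]
          exact hedge i hi

lemma transGen_walk {Tx : Type*} {R : Tx → Tx → Prop} {a b : Tx}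
    (h : Relation.TransGen R a b) :
    ∃ m, 0 < m ∧ ∃ w : ℕ → Tx, w 0 = a ∧ w m = b ∧ ∀ i < m, R (w i) (w (i + 1)) := by
  induction h with
  | @single c hc =>
    refine ⟨1, one_pos, fun i => if i = 0 then a else c, by simp, by simp, ?_⟩
    intro i hi
    interval_cases i
    simpa using hc
  | @tail b' c' h1 hbc ih =>
    obtain ⟨m, hm, w, h0, hmb, hedge⟩ := ih
    refine ⟨m + 1, by omega, fun i => if i ≤ m then w i else c', by simp [h0], ?_, ?_⟩
    · simp only [if_neg (by omega : ¬ m + 1 ≤ m)]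
    · intro i hi
      by_cases h : i + 1 ≤ m
      · simp only [if_pos h, if_pos (by omega : i ≤ m)]
        exact hedge i (by omega)
      · have him : i = m := by omega
        simp only [if_pos (le_of_eq him), if_neg (by omega : ¬ i + 1 ≤ m)]
        rw [him, hmb]
        exact hbc

lemma cycle_of_two {Tx : Type*} {R : Tx → Tx → Prop} {a b : Tx} (hab : a ≠ b)
    (h1 : Relation.TransGen R a b) (h2 : Relation.TransGen R b a) :
    ∃ k, 1 < k ∧ ∃ Ts : ℕ → Tx,
      (∀ i < k, ∀ j < k, Ts i = Ts j → i = j) ∧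
      (∀ i < k, R (Ts i) (Ts ((i + 1) % k))) := by
  obtain ⟨m1, hm1, w1, h10, h1m, he1⟩ := transGen_walk h1
  obtain ⟨m2, hm2, w2, h20, h2m, he2⟩ := transGen_walk h2
  refine walk_to_cycle R (m1 + m2) (fun i => if i ≤ m1 then w1 i else w2 (i - m1)) a b hab
    (by simp [h10]) ?_ ?_ m1 (by omega) (by simp [h1m])
  · simp only [if_neg (by omega : ¬ m1 + m2 ≤ m1)]
    have : m1 + m2 - m1 = m2 := by omega
    rw [this, h2m]
  · intro i hi
    by_cases h : i + 1 ≤ m1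
    · simp only [if_pos h, if_pos (by omega : i ≤ m1)]
      exact he1 i (by omega)
    · by_cases h' : i ≤ m1
      · have him : i = m1 := by omega
        simp only [if_pos (le_of_eq him), if_neg h]
        rw [him, h1m]
        have h1 : m1 + 1 - m1 = 1 := by omega
        rw [h1, ← h20]
        exact he2 0 (by omega)
      · simp only [if_neg h, if_neg h']
        have : i + 1 - m1 = (i - m1) + 1 := by omega
        rw [this]
        exact he2 (i - m1) (by omega)

lemma newEdge_transGen {n : ℕ} {Tx : Type*} {C : Fin n → Fin n → Prop} {txn : Fin n → Tx}
    {completed : Tx → Prop} {e f : Fin n} (h : newEdge C txn completed e f) :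
    Relation.TransGen (thb C txn) (txn e) (txn f) := by
  obtain ⟨g, hg, hcase⟩ := h
  rcases hcase with rfl | ⟨⟨k, hk, es, fs, h0, hlast, heq, hstep⟩, _⟩
  · exact Relation.TransGen.single ⟨e, g, rfl, rfl, hg⟩
  · have key : ∀ i < k, Relation.TransGen (thb C txn) (txn e) (txn (es i)) := by
      intro i
      induction i with
      | zero =>
        intro _
        refine Relation.TransGen.single ⟨e, es 0, rfl, rfl, ?_⟩
        rw [h0]; exact hg
      | succ i ihh =>
        intro hik
        exact (ihh (by omega)).tail
          ⟨fs i, es (i + 1), (heq i (by omega)).symm, rfl, (hstep i hik).2⟩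
    have hkey := key (k - 1) (by omega)
    have hkf : txn (es (k - 1)) = txn f := by rw [heq (k - 1) (by omega), hlast]
    rwa [hkf] at hkey

/-- Soundness: if there are a transaction `T` (with begin event `Tbegin`)
and events `f ∈ T`, `e ∉ T` with `Tbegin ⤳ e` and `e ⤳ f`, then the trace
is not conflict serializable. -/
theorem newEdge_implies_violation {n : ℕ} {Tx : Type*}
    (C : Fin n → Fin n → Prop) (txn : Fin n → Tx) (completed : Tx → Prop)
    (T : Tx) (Tbegin e f : Fin n)
    (hTb : txn Tbegin = T) (hf : txn f = T) (he : txn e ≠ T)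
    (h1 : newEdge C txn completed Tbegin e)
    (h2 : newEdge C txn completed e f) :
    hasCycle C txn := by
  have t1 : Relation.TransGen (thb C txn) T (txn e) := by
    have := newEdge_transGen h1
    rwa [hTb] at this
  have t2 : Relation.TransGen (thb C txn) (txn e) T := by
    have := newEdge_transGen h2
    rwa [hf] at this
  exact cycle_of_two (fun h => he h.symm) t1 t2
end

section
/- Let σ be a trace that is not conflict serializable, witnessed by distinct transactions T0, ..., T_{k-1} (k > 1) with T_i ≤THB T_{(i+1) mod k}, such that all of the Ti except possibly one are completed in σ. Then there exist a transaction T and events e, f in σ with f ∈ T, e ∉ T, T▷ ⤳ e, and e ⤳ f, where T▷ is the begin event of T. -/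
private lemma succ_mod_ne {k t : ℕ} (hk : 1 < k) (ht : t < k) : (t + 1) % k ≠ t := by
  rcases eq_or_lt_of_le (Nat.succ_le_of_lt ht) with h | h
  · rw [← h, Nat.mod_self]; omega
  · rw [Nat.mod_eq_of_lt h]; omega

private lemma succ_mod_ne' {k : ℕ} (hk : 1 < k) (m : ℕ) : (m + 1) % k ≠ m % k := by
  rw [← Nat.mod_add_mod]
  exact succ_mod_ne hk (Nat.mod_lt _ (by omega))

/-- Completeness: if the trace has a `thb`-cycle of `k > 1` distinct
transactions, all completed except possibly one, then there are a transaction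
`T` and events `f ∈ T`, `e ∉ T` with `T▷ ⤳ e` and `e ⤳ f`. -/
theorem violation_implies_newEdge {n : ℕ} {Tx : Type*}
    (C : Fin n → Fin n → Prop) (txn : Fin n → Tx) (completed : Tx → Prop)
    (beginEv : Tx → Fin n)
    (hbeginTxn : ∀ T, txn (beginEv T) = T)
    (hbeginChb : ∀ e, chb C (beginEv (txn e)) e)
    (k : ℕ) (hk : 1 < k) (Ts : ℕ → Tx)
    (hdist : ∀ i < k, ∀ j < k, Ts i = Ts j → i = j)
    (hcyc : ∀ i < k, thb C txn (Ts i) (Ts ((i + 1) % k)))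
    (hcomp : ∃ j, ∀ i < k, i ≠ j → completed (Ts i)) :
    ∃ (T : Tx) (e f : Fin n), txn f = T ∧ txn e ≠ T ∧
      newEdge C txn completed (beginEv T) e ∧ newEdge C txn completed e f := by
  obtain ⟨j, hj⟩ := hcomp
  -- normalize the exceptional index
  set t : ℕ := if j < k then j else 0 with ht
  have htk : t < k := by by_cases h : j < k <;> simp [ht, h] <;> omega
  have hcompt : ∀ i < k, i ≠ t → completed (Ts i) := by
    intro i hik hit
    by_cases h : j < k
    · exact hj i hik (by simpa [ht, h] using hit)
    · exact hj i hik (by omega)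
  -- choose chb witnesses for each cycle edge (indexed mod k)
  have hchoose : ∀ i : ℕ, ∃ a b : Fin n,
      txn a = Ts (i % k) ∧ txn b = Ts ((i + 1) % k) ∧ chb C a b := by
    intro i
    obtain ⟨a, b, ha, hb, hab⟩ := hcyc (i % k) (Nat.mod_lt _ (by omega))
    refine ⟨a, b, ha, ?_, hab⟩
    rw [hb, Nat.mod_add_mod]
  choose A B hA hB hAB using hchoose
  have hmodmod : ∀ m : ℕ, m % k % k = m % k := fun m => Nat.mod_mod_of_dvd _ dvd_rfl
  -- the predecessor index of t in the cycle
  set p : ℕ := if t = 0 then k - 1 else t - 1 with hp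
  have hpk : p < k := by by_cases h : t = 0 <;> simp [hp, h] <;> omega
  have hpt : p ≠ t := by by_cases h : t = 0 <;> simp [hp, h] <;> omega
  have hp1 : (p + 1) % k = t := by
    by_cases h : t = 0
    · simp [hp, h, Nat.sub_add_cancel (by omega : 1 ≤ k), Nat.mod_self]
    · have : p + 1 = t := by simp [hp, h]; omega
      rw [this, Nat.mod_eq_of_lt htk]
  refine ⟨Ts t, A p, B p, ?_, ?_, ?_, ?_⟩
  · rw [hB p, hp1]
  · rw [hA p, Nat.mod_eq_of_lt hpk]
    intro hEq
    exact hpt (hdist p hpk t htk hEq)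
  · -- newEdge (beginEv (Ts t)) (A p)
    refine ⟨B t, ?_, Or.inr ⟨?_, ?_⟩⟩
    · -- chb (beginEv (Ts t)) (B t)
      have h1 : chb C (beginEv (Ts t)) (A t) := by
        have := hbeginChb (A t)
        rwa [hA t, Nat.mod_eq_of_lt htk] at this
      exact h1.trans (hAB t)
    · -- pathTxn (B t) (A p)
      refine ⟨2 * k - 1, by omega, fun i => B ((t + i) % k), fun i => A ((t + 1 + i) % k),
        ?_, ?_, ?_, ?_⟩
      · show B ((t + 0) % k) = B t
        rw [Nat.add_zero, Nat.mod_eq_of_lt htk]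
      · show A ((t + 1 + (2 * k - 1 - 1)) % k) = A p
        congr 1
        by_cases h : t = 0
        · have harg : t + 1 + (2 * k - 1 - 1) = (k - 1) + 1 * k := by omega
          rw [harg, Nat.add_mul_mod_self_right, Nat.mod_eq_of_lt (by omega)]
          simp [hp, h]
        · have harg : t + 1 + (2 * k - 1 - 1) = (t - 1) + 2 * k := by omega
          rw [harg, Nat.add_mul_mod_self_right, Nat.mod_eq_of_lt (by omega)]
          simp [hp, h]
      · intro i _
        rw [hB, hA, Nat.mod_add_mod, hmodmod]
        congr 2
        omega
      · intro i _
        constructor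
        · rw [hA, hB, hmodmod, Nat.mod_add_mod]
          intro hEq
          have h1 := hdist _ (Nat.mod_lt _ (by omega : 0 < k)) _
            (Nat.mod_lt _ (by omega : 0 < k)) hEq
          have h2 : t + (i + 1) + 1 = (t + 1 + i) + 1 := by omega
          rw [h2] at h1
          exact succ_mod_ne' hk (t + 1 + i) h1.symm
        · show chb C (A ((t + 1 + i) % k)) (B ((t + (i + 1)) % k))
          have h2 : t + (i + 1) = t + 1 + i := by omega
          rw [h2]
          exact hAB _
    · -- completed (txn (B t))
      rw [hB t]
      exact hcompt _ (Nat.mod_lt _ (by omega)) (succ_mod_ne hk htk)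
  · -- newEdge (A p) (B p)
    exact ⟨B p, hAB p, Or.inl rfl⟩
end

section
/- If a trace σ has a ≤THB-cycle of length k > 1 involving a transaction T that is nested inside another transaction T' (every event of T is an event of T'), then σ also has a ≤THB-cycle involving T' in place of T; hence detecting conflict-serializability violations is unaffected by replacing nested transactions with their outermost enclosing transactions. -/
/-- CHB, with events given by membership (transactions may be nested). -/
def chbM {n : ℕ} (C : Fin n → Fin n → Prop) : Fin n → Fin n → Prop :=
  Relation.ReflTransGen (fun e f => e < f ∧ C e f)

/-- Transaction happens-before, with event membership in transactions given
by a relation (so transactions may be nested). -/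
def thbM {n : ℕ} {Tx : Type*} (C : Fin n → Fin n → Prop)
    (mem : Fin n → Tx → Prop) (T T' : Tx) : Prop :=
  ∃ e f, mem e T ∧ mem f T' ∧ chbM C e f

/-- If a THB-cycle of k > 1 distinct transactions goes through a transaction
Ts 0 nested inside T' (every event of Ts 0 is an event of T'), then there is
also a THB-cycle of more than one distinct transactions containing T'. -/
theorem nested_cycle_outer {n : ℕ} {Tx : Type*}
    (C : Fin n → Fin n → Prop) (mem : Fin n → Tx → Prop)
    (k : ℕ) (hk : 1 < k) (Ts : ℕ → Tx)
    (hdist : ∀ i < k, ∀ j < k, Ts i = Ts j → i = j)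
    (hcyc : ∀ i < k, thbM C mem (Ts i) (Ts ((i + 1) % k)))
    (T' : Tx) (hnested : ∀ e, mem e (Ts 0) → mem e T') :
    ∃ k', 1 < k' ∧ ∃ Ts' : ℕ → Tx,
      (∀ i < k', ∀ j < k', Ts' i = Ts' j → i = j) ∧
      (∀ i < k', thbM C mem (Ts' i) (Ts' ((i + 1) % k'))) ∧
      (∃ i < k', Ts' i = T') := by
  by_cases h : ∃ j < k, Ts j = T'
  · exact ⟨k, hk, Ts, hdist, hcyc, h⟩
  · push_neg at h
    refine ⟨k, hk, fun i => if i = 0 then T' else Ts i, ?_, ?_,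
      ⟨0, by omega, by simp⟩⟩
    · intro i hi j hj hij
      by_cases hi0 : i = 0 <;> by_cases hj0 : j = 0 <;>
        simp [hi0, hj0] at hij ⊢
      · exact absurd hij.symm (h j hj)
      · exact absurd hij (h i hi)
      · exact hdist i hi j hj hij
    · intro i hi
      by_cases hi0 : i = 0
      · subst hi0
        have h1 : (0 + 1) % k = 1 := Nat.mod_eq_of_lt hk
        obtain ⟨e, f, he, hf, hc⟩ := hcyc 0 (by omega)
        refine ⟨e, f, by simpa using hnested e he, ?_, hc⟩
        simp only [h1]
        simpa [h1, (by omega : (1:ℕ) ≠ 0)] using hf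
      · by_cases hlast : (i + 1) % k = 0
        · obtain ⟨e, f, he, hf, hc⟩ := hcyc i hi
          refine ⟨e, f, by simpa [hi0] using he, ?_, hc⟩
          simp only [hlast]
          simpa [hlast] using hnested f (by simpa [hlast] using hf)
        · obtain ⟨e, f, he, hf, hc⟩ := hcyc i hi
          exact ⟨e, f, by simpa [hi0] using he, by simpa [hlast] using hf, hc⟩
end

section
/- In trace ρ3 = begin(t1), begin(t2), w(t1,x), w(t2,y), r(t1,y), r(t2,x), end(t1), end(t2), there is no pair of events e ≠ f in the same transaction such that e ≤CHB g ≤CHB f for some event g of the other transaction (i.e., no ≤CHB-path leaves a transaction and comes back to it), yet the trace is not conflict serializable since T1 ≤THB T2 and T2 ≤THB T1. -/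
/-- Trace rho3 = begin(t1), begin(t2), w(t1,x), w(t2,y), r(t1,y), r(t2,x),
end(t1), end(t2): threads of the 8 events (0-indexed). -/
def thr3 : Fin 8 → Fin 2 := ![0, 1, 0, 1, 0, 1, 0, 1]

/-- Conflicts of rho3: same-thread pairs, plus w(t1,x)/r(t2,x) (events 2,5)
and w(t2,y)/r(t1,y) (events 3,4). -/
def C3 : Fin 8 → Fin 8 → Prop := fun e f =>
  thr3 e = thr3 f ∨ (e = 2 ∧ f = 5) ∨ (e = 5 ∧ f = 2) ∨
    (e = 3 ∧ f = 4) ∨ (e = 4 ∧ f = 3)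


instance : DecidableRel C3 := fun a b => by unfold C3 thr3; infer_instance

def P3 (a b : Fin 8) : Prop :=
  a ≤ b ∧ (thr3 a ≠ thr3 b →
    (thr3 a = 0 ∧ a ≤ 2 ∧ 5 ≤ b) ∨ (thr3 a = 1 ∧ a ≤ 3 ∧ 4 ≤ b))

instance : DecidableRel P3 := fun a b => by unfold P3 thr3; infer_instance

lemma chb_P3 : ∀ a b : Fin 8, chb C3 a b → P3 a b := by
  intro a b h
  induction h with
  | refl => exact (by decide : ∀ x : Fin 8, P3 x x) a
  | @tail c d h1 h2 ih =>
      exact (by decide : ∀ x y z : Fin 8, P3 x y → y < z → C3 y z → P3 x z)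
        a c d ih h2.1 h2.2

/-- In rho3 there is no CHB-path that leaves a transaction and returns to it,
yet the trace is not conflict serializable: T1 THB T2 and T2 THB T1. -/
theorem rho3_no_chb_path_yet_violation :
    (¬ ∃ e f g : Fin 8, e ≠ f ∧ thr3 e = thr3 f ∧ thr3 g ≠ thr3 e ∧
        chb C3 e g ∧ chb C3 g f) ∧
    thb C3 thr3 0 1 ∧ thb C3 thr3 1 0 ∧
    hasCycle C3 thr3 := by
  refine ⟨?_, ?_, ?_, ?_⟩
  · rintro ⟨e, f, g, _, heq, hgne, h1, h2⟩
    exact (by decide : ∀ e f g : Fin 8, thr3 e = thr3 f → thr3 g ≠ thr3 e →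
      P3 e g → P3 g f → False) e f g heq hgne (chb_P3 _ _ h1) (chb_P3 _ _ h2)
  · exact ⟨2, 5, by decide, by decide,
      Relation.ReflTransGen.single ⟨by decide, by unfold C3; decide⟩⟩
  · exact ⟨3, 4, by decide, by decide,
      Relation.ReflTransGen.single ⟨by decide, by unfold C3; decide⟩⟩
  · refine ⟨2, by norm_num, fun i => if i = 0 then 0 else 1, ?_, ?_⟩
    · intro i hi j hj hij
      interval_cases i <;> interval_cases j <;> simp_all
    · intro i hi
      interval_cases i <;> simp
      · exact ⟨2, 5, by decide, by decide,
          Relation.ReflTransGen.single ⟨by decide, by unfold C3; decide⟩⟩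
      · exact ⟨3, 4, by decide, by decide,
          Relation.ReflTransGen.single ⟨by decide, by unfold C3; decide⟩⟩
end

section
/- If σ is a complete trace (every begun transaction has its matching end event in σ) that is not conflict serializable, then there exist a transaction T and events e, f in σ with f ∈ T, e ∉ T, txn(e) completed in σ, T▷ ⤳ e and e ⤳ f (where T▷ is the begin event of T); conversely if such T, e, f exist in any prefix of σ then σ is not conflict serializable. -/
/-- Conflict-happens-before of the length-m prefix of a trace whose events are
natural numbers in trace order: reflexive-transitive closure of conflict edges
oriented by trace order, restricted to events of the prefix. -/
def chbIn (C : ℕ → ℕ → Prop) (m : ℕ) : ℕ → ℕ → Prop :=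
  Relation.ReflTransGen (fun e f => e < f ∧ f < m ∧ C e f)

/-- Path through transactions in the length-m prefix. -/
def pathIn {Tx : Type*} (C : ℕ → ℕ → Prop) (txn : ℕ → Tx) (m : ℕ)
    (e f : ℕ) : Prop :=
  ∃ k, 1 < k ∧ ∃ es fs : ℕ → ℕ,
    es 0 = e ∧ fs (k - 1) = f ∧
    (∀ i < k, es i < m ∧ fs i < m) ∧
    (∀ i < k, txn (es i) = txn (fs i)) ∧
    (∀ i, i + 1 < k → txn (fs i) ≠ txn (es (i + 1)) ∧ chbIn C m (fs i) (es (i + 1)))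

/-- New-edge relation in the length-m prefix; a transaction is completed in the
prefix iff its end event occurs in it. -/
def newEdgeIn {Tx : Type*} (C : ℕ → ℕ → Prop) (txn : ℕ → Tx) (endEv : Tx → ℕ)
    (m : ℕ) (e f : ℕ) : Prop :=
  ∃ g, chbIn C m e g ∧ (g = f ∨ (pathIn C txn m g f ∧ endEv (txn g) < m))

/-- Transaction happens-before in the length-m prefix. -/
def thbIn {Tx : Type*} (C : ℕ → ℕ → Prop) (txn : ℕ → Tx) (m : ℕ)
    (T T' : Tx) : Prop :=
  ∃ e f, e < m ∧ f < m ∧ txn e = T ∧ txn f = T' ∧ chbIn C m e f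

/-- Conflict-serializability violation in the length-m prefix. -/
def hasCycleIn {Tx : Type*} (C : ℕ → ℕ → Prop) (txn : ℕ → Tx) (m : ℕ) : Prop :=
  ∃ k, 1 < k ∧ ∃ Ts : ℕ → Tx,
    (∀ i < k, ∀ j < k, Ts i = Ts j → i = j) ∧
    (∀ i < k, thbIn C txn m (Ts i) (Ts ((i + 1) % k)))

section Aux

lemma chbIn_mono {C : ℕ → ℕ → Prop} {m n : ℕ} (h : m ≤ n) {a b : ℕ}
    (hab : chbIn C m a b) : chbIn C n a b :=
  Relation.ReflTransGen.mono (fun x y (hd : x < y ∧ y < m ∧ C x y) => (⟨hd.1, lt_of_lt_of_le hd.2.1 h, hd.2.2⟩ : x < y ∧ y < n ∧ C x y)) a b hab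

lemma chbIn_lt {C : ℕ → ℕ → Prop} {m a b : ℕ} (hab : chbIn C m a b) :
    b < m → a < m := by
  induction hab with
  | refl => exact id
  | tail h1 h2 ih => intro _; exact ih (lt_trans h2.1 h2.2.1)

lemma chb_rtg {Tx : Type*} (C : ℕ → ℕ → Prop) (txn : ℕ → Tx) (N : ℕ) {a b : ℕ}
    (h : chbIn C N a b) :
    Relation.ReflTransGen (fun T T' => T ≠ T' ∧ thbIn C txn N T T') (txn a) (txn b) := by
  induction h with
  | refl => exact .refl
  | @tail c d h1 h2 ih =>
    by_cases hq : txn c = txn d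
    · rwa [hq] at ih
    · exact ih.tail ⟨hq, ⟨c, d, lt_trans h2.1 h2.2.1, h2.2.1, rfl, rfl,
        Relation.ReflTransGen.single h2⟩⟩

lemma path_rtg {Tx : Type*} {C : ℕ → ℕ → Prop} {txn : ℕ → Tx} {m N : ℕ}
    (hmN : m ≤ N) {g f : ℕ} (h : pathIn C txn m g f) :
    Relation.ReflTransGen (fun T T' => T ≠ T' ∧ thbIn C txn N T T') (txn g) (txn f) := by
  obtain ⟨k, hk, es, fs, h0, hlast, hb, heq, hcons⟩ := h
  have key : ∀ i, i < k →
      Relation.ReflTransGen (fun T T' => T ≠ T' ∧ thbIn C txn N T T')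
        (txn (es 0)) (txn (fs i)) := by
    intro i
    induction i with
    | zero => intro h0k; rw [heq 0 h0k]
    | succ j ih =>
      intro hjk
      have hj : j < k := by omega
      have hc := hcons j hjk
      have step : (fun T T' => T ≠ T' ∧ thbIn C txn N T T') (txn (fs j)) (txn (es (j+1))) :=
        ⟨hc.1, ⟨fs j, es (j+1), lt_of_lt_of_le (hb j hj).2 hmN,
          lt_of_lt_of_le (hb (j+1) hjk).1 hmN, rfl, rfl, chbIn_mono hmN hc.2⟩⟩
      have := (ih hj).tail step
      rwa [heq (j+1) hjk] at this
  have := key (k-1) (by omega)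
  rw [hlast, h0] at this
  exact this

lemma newEdge_rtg {Tx : Type*} {C : ℕ → ℕ → Prop} {txn : ℕ → Tx} {endEv : Tx → ℕ}
    {m N : ℕ} (hmN : m ≤ N) {a b : ℕ} (h : newEdgeIn C txn endEv m a b) :
    Relation.ReflTransGen (fun T T' => T ≠ T' ∧ thbIn C txn N T T') (txn a) (txn b) := by
  obtain ⟨g, hg, hgb⟩ := h
  have h1 := chb_rtg C txn N (chbIn_mono hmN hg)
  rcases hgb with he | hp
  · rwa [he] at h1
  · exact h1.trans (path_rtg hmN hp.1)

lemma transGen_chain {α : Type*} {R : α → α → Prop} {a b : α}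
    (h : Relation.TransGen R a b) :
    ∃ n, 0 < n ∧ ∃ U : ℕ → α, U 0 = a ∧ U n = b ∧ ∀ i < n, R (U i) (U (i+1)) := by
  induction h with
  | @single c hr =>
    refine ⟨1, one_pos, fun i => if i = 0 then a else c, by simp, by simp, ?_⟩
    intro i hi
    interval_cases i
    simpa using hr
  | @tail c d h1 hr ih =>
    obtain ⟨n, hn, U, hU0, hUn, hstep⟩ := ih
    refine ⟨n+1, by omega, fun i => if i ≤ n then U i else d, ?_, ?_, ?_⟩
    · show (if 0 ≤ n then U 0 else d) = a
      rw [if_pos (Nat.zero_le n), hU0]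
    · show (if n + 1 ≤ n then U (n+1) else d) = d
      rw [if_neg (by omega)]
    · intro i hi
      show R (if i ≤ n then U i else d) (if i + 1 ≤ n then U (i+1) else d)
      rcases Nat.lt_or_ge i n with h' | h'
      · rw [if_pos (le_of_lt h'), if_pos (Nat.succ_le_of_lt h')]
        exact hstep i h'
      · have hin : i = n := by omega
        subst hin
        rw [if_pos (le_refl i), if_neg (by omega), hUn]
        exact hr

lemma cycle_extract {α : Type*} {R : α → α → Prop} (hirr : ∀ a, ¬ R a a)
    {T : α} (h : Relation.TransGen R T T) :
    ∃ k, 1 < k ∧ ∃ Ts : ℕ → α,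
      (∀ i < k, ∀ j < k, Ts i = Ts j → i = j) ∧
      (∀ i < k, R (Ts i) (Ts ((i + 1) % k))) := by
  classical
  obtain ⟨n, hn, U, hU0, hUn, hstep⟩ := transGen_chain h
  have hEx : ∃ n, 0 < n ∧ ∃ U : ℕ → α, U 0 = U n ∧ ∀ i < n, R (U i) (U (i+1)) :=
    ⟨n, hn, U, by rw [hU0, hUn], hstep⟩
  obtain ⟨k, ⟨hk0, V, hVc, hVstep⟩, hmin⟩ :
      ∃ k, (0 < k ∧ ∃ V : ℕ → α, V 0 = V k ∧ ∀ i < k, R (V i) (V (i+1))) ∧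
        ∀ m, m < k → ¬ (0 < m ∧ ∃ W : ℕ → α, W 0 = W m ∧ ∀ i < m, R (W i) (W (i+1))) :=
    ⟨Nat.find hEx, Nat.find_spec hEx, fun m hm => Nat.find_min hEx hm⟩
  have hk1 : 1 < k := by
    rcases Nat.lt_or_ge 1 k with h' | h'
    · exact h'
    · exfalso
      have hke : k = 1 := by omega
      have hst := hVstep 0 (by omega)
      rw [hke] at hVc
      rw [← hVc] at hst
      exact hirr _ hst
  have hne : ∀ i j, i < j → j < k → V i ≠ V j := by
    intro i j hij hjk heq
    refine hmin (j - i) (by omega) ⟨by omega, fun t => V (i + t), ?_, ?_⟩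
    · simp only [Nat.add_zero]
      rw [show i + (j - i) = j by omega]
      exact heq
    · intro t ht
      have : i + t < k := by omega
      have := hVstep (i + t) this
      rwa [show i + t + 1 = i + (t+1) by omega] at this
  refine ⟨k, hk1, V, ?_, ?_⟩
  · intro i hi j hj heq
    rcases lt_trichotomy i j with h' | h' | h'
    · exact absurd heq (hne i j h' hj)
    · exact h'
    · exact absurd heq.symm (hne j i h' hi)
  · intro i hi
    rcases Nat.lt_or_ge (i+1) k with h' | h'
    · rw [Nat.mod_eq_of_lt h']
      exact hVstep i hi
    · have hik : i + 1 = k := by omega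
      have h2 := hVstep i hi
      rw [hik] at h2
      rw [hik, Nat.mod_self, hVc]
      exact h2

end Aux

/-- For a complete trace (of length N, with every begun transaction completed):
if it is not conflict serializable then there are T, e, f with f in T, e not
in T, txn e completed, T-begin newEdge e and e newEdge f; conversely, if such
T, e, f exist in any prefix, the trace is not conflict serializable. -/

theorem complete_trace_characterization {Tx : Type*}
    (C : ℕ → ℕ → Prop) (txn : ℕ → Tx) (beginEv endEv : Tx → ℕ) (N : ℕ)
    (hbeginTxn : ∀ T, txn (beginEv T) = T)
    (hbeginChb : ∀ e < N, chbIn C N (beginEv (txn e)) e)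
    (hcomplete : ∀ e < N, endEv (txn e) < N) :
    (hasCycleIn C txn N →
      ∃ (T : Tx) (e f : ℕ), e < N ∧ f < N ∧ txn f = T ∧ txn e ≠ T ∧
        endEv (txn e) < N ∧
        newEdgeIn C txn endEv N (beginEv T) e ∧
        newEdgeIn C txn endEv N e f) ∧
    (∀ m ≤ N,
      (∃ (T : Tx) (e f : ℕ), e < m ∧ f < m ∧ txn f = T ∧ txn e ≠ T ∧
        endEv (txn e) < m ∧
        newEdgeIn C txn endEv m (beginEv T) e ∧
        newEdgeIn C txn endEv m e f) →
      hasCycleIn C txn N) := by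
  classical
  constructor
  · -- forward direction
    rintro ⟨k, hk1, Ts, hinj, hcyc⟩
    have H : ∀ i, ∃ p : ℕ × ℕ, i < k → p.1 < N ∧ p.2 < N ∧ txn p.1 = Ts i ∧
        txn p.2 = Ts ((i+1) % k) ∧ chbIn C N p.1 p.2 := by
      intro i
      by_cases hi : i < k
      · obtain ⟨a, b, h1, h2, h3, h4, h5⟩ := hcyc i hi
        exact ⟨(a, b), fun _ => ⟨h1, h2, h3, h4, h5⟩⟩
      · exact ⟨(0, 0), fun h => absurd h hi⟩
    choose p hp using H
    set A : ℕ → ℕ := fun i => (p i).1 with hA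
    set B : ℕ → ℕ := fun i => (p i).2 with hB
    have hk0 : 0 < k := by omega
    have h1k : 1 % k = 1 := Nat.mod_eq_of_lt hk1
    have hp0 := hp 0 hk0
    have hp1k : txn (B 0) = Ts 1 := by rw [hp0.2.2.2.1, h1k]
    have hBN : B 0 < N := hp0.2.1
    have hAN : A 0 < N := hp0.1
    -- begin event of Ts 1 is in the trace
    have hbegin_lt : beginEv (Ts 1) < N := by
      have hc := hbeginChb (B 0) hBN
      rw [hp1k] at hc
      exact chbIn_lt hc hBN
    refine ⟨Ts 1, A 0, B 0, hAN, hBN, hp1k, ?_, hcomplete _ hAN, ?_, ?_⟩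
    · rw [hp0.2.2.1]
      intro h
      have := hinj 0 hk0 1 hk1 h
      omega
    · -- newEdgeIn N (beginEv (Ts 1)) (A 0) via path around the cycle
      refine ⟨beginEv (Ts 1), Relation.ReflTransGen.refl, Or.inr ⟨?_, ?_⟩⟩
      · refine ⟨k, hk1, (fun j => if j = 0 then beginEv (Ts 1) else B j),
          (fun j => A ((j+1) % k)), if_pos rfl, ?_, ?_, ?_, ?_⟩
        · show A ((k - 1 + 1) % k) = A 0
          rw [show k - 1 + 1 = k by omega, Nat.mod_self]
        · intro i hik
          constructor
          · show (if i = 0 then beginEv (Ts 1) else B i) < N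
            by_cases hi0 : i = 0
            · rw [if_pos hi0]; exact hbegin_lt
            · rw [if_neg hi0]
              exact (hp i hik).2.1
          · exact (hp ((i+1) % k) (Nat.mod_lt _ hk0)).1
        · intro i hik
          show txn (if i = 0 then beginEv (Ts 1) else B i) = txn (A ((i+1) % k))
          by_cases hi0 : i = 0
          · subst hi0
            rw [if_pos rfl, hbeginTxn]
            show Ts 1 = txn ((p (1 % k)).1)
            rw [h1k, (hp 1 hk1).2.2.1]
          · rw [if_neg hi0, (hp i hik).2.2.2.1,
              (hp ((i+1) % k) (Nat.mod_lt _ hk0)).2.2.1]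
        · intro i hik
          have hi1 : i + 1 < k := hik
          have h1 : (i + 1) % k = i + 1 := Nat.mod_eq_of_lt hi1
          constructor
          · show txn (A ((i+1) % k)) ≠ txn (if i + 1 = 0 then beginEv (Ts 1) else B (i+1))
            rw [if_neg (by omega : ¬ i + 1 = 0)]
            rw [(hp ((i+1) % k) (Nat.mod_lt _ hk0)).2.2.1,
              (hp (i+1) hi1).2.2.2.1]
            intro heq
            have h2 : (i + 1 + 1) % k < k := Nat.mod_lt _ hk0
            have := hinj ((i+1) % k) (Nat.mod_lt _ hk0) ((i+1+1) % k) h2 heq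
            rw [h1] at this
            rcases Nat.lt_or_ge (i+2) k with h' | h'
            · rw [Nat.mod_eq_of_lt h'] at this; omega
            · have : (i + 1 + 1) % k = 0 := by
                have : i + 1 + 1 = k := by omega
                rw [this, Nat.mod_self]
              omega
          · show chbIn C N (A ((i+1) % k)) (if i + 1 = 0 then beginEv (Ts 1) else B (i+1))
            rw [if_neg (by omega : ¬ i + 1 = 0), h1]
            exact (hp (i+1) hi1).2.2.2.2
      · rw [hbeginTxn, ← hp1k]
        exact hcomplete _ hBN
    · exact ⟨B 0, hp0.2.2.2.2, Or.inl rfl⟩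
  · -- backward direction
    rintro m hm ⟨T, e, f, hem, hfm, hfT, heT, hend, hne1, hne2⟩
    have h1 := newEdge_rtg (txn := txn) (N := N) hm hne1
    have h2 := newEdge_rtg (txn := txn) (N := N) hm hne2
    rw [hbeginTxn] at h1
    rw [hfT] at h2
    have h1' : Relation.TransGen (fun T T' => T ≠ T' ∧ thbIn C txn N T T') T (txn e) := by
      rcases (Relation.reflTransGen_iff_eq_or_transGen.mp h1) with h' | h'
      · exact absurd h' heT
      · exact h'
    have hcyc : Relation.TransGen (fun T T' => T ≠ T' ∧ thbIn C txn N T T') T T :=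
      h1'.trans_left h2
    obtain ⟨k, hk1, Ts, hinj, hstep⟩ :=
      cycle_extract (fun a h => h.1 rfl) hcyc
    exact ⟨k, hk1, Ts, hinj, fun i hi => (hstep i hi).2⟩
end
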